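/- Coefficient bound from values on a uniformly perfect set: For every integer d ≥ 1 and every κ ∈ (0,1) there exists c > 0, depending only on κ and d, such that the following holds. Let ρ ∈ (0,1] with κ < ρ/100, and let K ⊆ (−ρ, ρ) be a κ-uniformly perfect subset of ℝ containing 0. Then for every real polynomial P(z) = Σ_{k=0}^{d} a_k z^k of degree at most d, max_{0 ≤ k ≤ d} |a_k| ≤ c · sup_{z ∈ K} |P(z)|. -/

import Mathlib

open Matrix in

/-- Coefficient bound from values on a uniformly perfect set: for every `d ≥ 1` and
`κ ∈ (0,1)` there exists `c > 0` such that for every `ρ ∈ (0,1]` with `κ < ρ/100`,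
every `κ`-uniformly perfect set `K ⊆ (-ρ,ρ)` containing `0`, and every polynomial
`P(z) = Σ_{k ≤ d} a_k z^k`, one has `max_k |a_k| ≤ c · sup_{z ∈ K} |P(z)|`. -/
theorem stmt_8 (d : ℕ) (hd : 1 ≤ d) (κ : ℝ) (hκ : κ ∈ Set.Ioo (0 : ℝ) 1) :
    ∃ c : ℝ, 0 < c ∧
      ∀ ρ : ℝ, ρ ∈ Set.Ioc (0 : ℝ) 1 → κ < ρ / 100 →
        ∀ K : Set ℝ, K ⊆ Set.Ioo (-ρ) ρ → (0 : ℝ) ∈ K →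
          (∀ σ ∈ Set.Ioo (0 : ℝ) 1, ∀ x ∈ K, ∃ y ∈ K, κ * σ ≤ |x - y| ∧ |x - y| ≤ σ) →
          ∀ a : Fin (d + 1) → ℝ, ∀ i : Fin (d + 1),
            |a i| ≤ c * ⨆ z : K, |∑ k : Fin (d + 1), a k * (z : ℝ) ^ (k : ℕ)| := by
  obtain ⟨hκ0, hκ1⟩ := hκ
  have hκ2 : κ / 2 < 1 := by linarith
  set δ : ℝ := (κ/2)^(d+1) with hδdef
  have hδ0 : 0 < δ := pow_pos (by linarith) _
  have hδ1 : δ ≤ 1 := pow_le_one₀ (by linarith) (by linarith)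
  set D : ℝ := δ ^ ((d+1)^2) with hDdef
  have hD0 : 0 < D := pow_pos hδ0 _
  refine ⟨(d+1) * (Nat.factorial (d+1) : ℝ) * D⁻¹, by positivity, ?_⟩
  intro ρ hρ hκρ K hKsub h0K hup a i
  have hρ1 : ρ ≤ 1 := hρ.2
  -- all elements of K have powers bounded by 1
  have hzb : ∀ z ∈ K, ∀ k : ℕ, |z ^ k| ≤ (1:ℝ) := by
    intro z hz k
    have h := hKsub hz
    rw [abs_pow]
    exact pow_le_one₀ (abs_nonneg _)
      (le_trans (le_of_lt (abs_lt.mpr ⟨h.1, h.2⟩)) hρ1)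
  -- construct nodes
  have hσ : ∀ j : ℕ, (κ/2)^(j+1) ∈ Set.Ioo (0:ℝ) 1 :=
    fun j => ⟨pow_pos (by linarith) _, pow_lt_one₀ (by linarith) hκ2 (Nat.succ_ne_zero j)⟩
  have hyex : ∀ j : ℕ, ∃ y, y ∈ K ∧ κ * (κ/2)^(j+1) ≤ |y| ∧ |y| ≤ (κ/2)^(j+1) := by
    intro j
    obtain ⟨y, hyK, h1, h2⟩ := hup _ (hσ j) 0 h0K
    rw [zero_sub, abs_neg] at h1 h2
    exact ⟨y, hyK, h1, h2⟩
  choose y hyK hy1 hy2 using hyex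
  set x : Fin (d+1) → ℝ := fun j => if (j:ℕ) = 0 then 0 else y ((j:ℕ) - 1) with hxdef
  have hxK : ∀ j, x j ∈ K := by
    intro j; by_cases h : (j:ℕ) = 0 <;> simp only [hxdef, h, ↓reduceIte, h0K, hyK]
  have hxlow : ∀ j : Fin (d+1), (j:ℕ) ≠ 0 →
      κ * (κ/2)^(j:ℕ) ≤ |x j| ∧ |x j| ≤ (κ/2)^(j:ℕ) := by
    intro j hj
    have h : (j:ℕ) - 1 + 1 = (j:ℕ) := Nat.succ_pred_eq_of_pos (Nat.pos_of_ne_zero hj)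
    simp only [hxdef, if_neg hj]
    rw [← h]
    exact ⟨hy1 _, hy2 _⟩
  -- separation
  have hsep : ∀ p q : Fin (d+1), (p:ℕ) < (q:ℕ) → δ ≤ |x q - x p| := by
    intro p q hpq
    have hq0 : (q:ℕ) ≠ 0 := by omega
    obtain ⟨hq1, hq2⟩ := hxlow q hq0
    have hqd : (q:ℕ) ≤ d := by omega
    by_cases hp0 : (p:ℕ) = 0
    · have hxp : x p = 0 := by simp only [hxdef, hp0, ↓reduceIte]
      rw [hxp, sub_zero]
      refine le_trans ?_ hq1
      have h1 : (κ/2)^d ≤ (κ/2)^(q:ℕ) :=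
        pow_le_pow_of_le_one (by linarith) (by linarith) hqd
      have : δ = (κ/2)^d * (κ/2) := by rw [hδdef, pow_succ]
      rw [this]
      calc (κ/2)^d * (κ/2) ≤ (κ/2)^(q:ℕ) * κ :=
            mul_le_mul h1 (by linarith) (by linarith) (pow_nonneg (by linarith) _)
        _ = κ * (κ/2)^(q:ℕ) := mul_comm _ _
    · obtain ⟨hp1, hp2⟩ := hxlow p hp0
      have hq2' : |x q| ≤ (κ/2) * (κ/2)^(p:ℕ) := by
        refine le_trans hq2 ?_
        rw [← pow_succ']
        exact pow_le_pow_of_le_one (by linarith) (by linarith) (by omega)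
      have hδle : δ ≤ (κ/2)^((p:ℕ)+1) :=
        pow_le_pow_of_le_one (by linarith) (by linarith) (by omega)
      have habs : |x p| - |x q| ≤ |x q - x p| := by
        rw [abs_sub_comm]; exact abs_sub_abs_le_abs_sub _ _
      have hps : (κ/2)^((p:ℕ)+1) = (κ/2) * (κ/2)^(p:ℕ) := pow_succ' _ _
      have hpn : (0:ℝ) ≤ (κ/2)^(p:ℕ) := pow_nonneg (by linarith) _
      nlinarith [hp1, hq2', habs, hδle]
  -- Vandermonde matrix
  set V := Matrix.vandermonde x with hVdef
  have hdetbig : D ≤ |V.det| := by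
    rw [hVdef, Matrix.det_vandermonde]
    have heq : |∏ p : Fin (d+1), ∏ q ∈ Finset.Ioi p, (x q - x p)|
        = ∏ p : Fin (d+1), ∏ q ∈ Finset.Ioi p, |x q - x p| := by
      rw [Finset.abs_prod]
      exact Finset.prod_congr rfl fun p _ => Finset.abs_prod _ _
    rw [heq]
    calc D = δ ^ ((d+1)^2) := rfl
      _ ≤ δ ^ (∑ p : Fin (d+1), (Finset.Ioi p).card) := by
          apply pow_le_pow_of_le_one hδ0.le hδ1
          calc (∑ p : Fin (d+1), (Finset.Ioi p).card)
              ≤ ∑ _p : Fin (d+1), (d+1) :=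
                Finset.sum_le_sum fun p _ =>
                  le_trans (Finset.card_le_univ _) (by simp)
            _ = (d+1)^2 := by simp [sq]
      _ = ∏ p : Fin (d+1), δ ^ (Finset.Ioi p).card := by
          rw [Finset.prod_pow_eq_pow_sum]
      _ = ∏ p : Fin (d+1), ∏ _q ∈ Finset.Ioi p, δ := by
          simp [Finset.prod_const]
      _ ≤ ∏ p : Fin (d+1), ∏ q ∈ Finset.Ioi p, |x q - x p| := by
          refine Finset.prod_le_prod (fun p _ => Finset.prod_nonneg fun _ _ => hδ0.le) ?_
          intro p _
          refine Finset.prod_le_prod (fun _ _ => hδ0.le) ?_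
          intro q hq
          exact hsep p q (Fin.lt_def.mp (Finset.mem_Ioi.mp hq))
  have hdet0 : V.det ≠ 0 := by
    intro h
    rw [h, abs_zero] at hdetbig
    linarith
  -- the sup
  set M := ⨆ z : K, |∑ k : Fin (d + 1), a k * (z : ℝ) ^ (k : ℕ)| with hMdef
  have hbdd : BddAbove (Set.range fun z : K => |∑ k : Fin (d + 1), a k * (z : ℝ) ^ (k : ℕ)|) := by
    refine ⟨∑ k : Fin (d+1), |a k|, ?_⟩
    rintro _ ⟨z, rfl⟩
    calc |∑ k : Fin (d + 1), a k * (z : ℝ) ^ (k : ℕ)|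
        ≤ ∑ k : Fin (d+1), |a k * (z : ℝ) ^ (k : ℕ)| := Finset.abs_sum_le_sum_abs _ _
      _ ≤ ∑ k : Fin (d+1), |a k| := by
          refine Finset.sum_le_sum fun k _ => ?_
          rw [abs_mul]
          exact mul_le_of_le_one_right (abs_nonneg _) (hzb z z.2 _)
  have hMle : ∀ j : Fin (d+1), |∑ k : Fin (d + 1), a k * (x j) ^ (k : ℕ)| ≤ M := by
    intro j
    exact le_ciSup hbdd (⟨x j, hxK j⟩ : K)
  have hM0 : (0:ℝ) ≤ M := le_trans (abs_nonneg _) (hMle 0)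
  -- linear algebra
  have hVa : V *ᵥ a = fun j => ∑ k : Fin (d + 1), a k * (x j) ^ (k : ℕ) := by
    funext j
    simp [Matrix.mulVec, dotProduct, hVdef, Matrix.vandermonde, mul_comm]
  have haeq : a = V⁻¹ *ᵥ (fun j => ∑ k : Fin (d + 1), a k * (x j) ^ (k : ℕ)) := by
    rw [← hVa, Matrix.mulVec_mulVec, Matrix.nonsing_inv_mul V (isUnit_iff_ne_zero.mpr hdet0), Matrix.one_mulVec]
  have hadj : ∀ p q, |V.adjugate p q| ≤ (Nat.factorial (d+1) : ℝ) := by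
    intro p q
    rw [Matrix.adjugate_apply]
    have hb : ∀ r s, |(V.updateRow q (Pi.single p 1)) r s| ≤ (1:ℝ) := by
      intro r s
      rw [Matrix.updateRow_apply]
      split
      · rw [Pi.single_apply]
        split <;> norm_num
      · exact hzb (x r) (hxK r) _
    have := Matrix.det_le (A := V.updateRow q (Pi.single p 1))
      (abv := AbsoluteValue.abs) (x := (1:ℝ)) hb
    simpa using this
  have hinv : ∀ p q, |V⁻¹ p q| ≤ D⁻¹ * (Nat.factorial (d+1) : ℝ) := by
    intro p q
    rw [Matrix.inv_def]
    simp only [Matrix.smul_apply, smul_eq_mul, Ring.inverse_eq_inv']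
    rw [abs_mul, abs_inv]
    have h1 : |V.det|⁻¹ ≤ D⁻¹ := by
      apply inv_anti₀ hD0 hdetbig
    exact mul_le_mul h1 (hadj p q) (abs_nonneg _) (by positivity)
  have hai : a i = ∑ j : Fin (d+1), V⁻¹ i j * ∑ k : Fin (d + 1), a k * (x j) ^ (k : ℕ) := by
    conv_lhs => rw [haeq]
    simp [Matrix.mulVec, dotProduct]
  calc |a i| = |∑ j : Fin (d+1), V⁻¹ i j * ∑ k : Fin (d + 1), a k * (x j) ^ (k : ℕ)| := by
        rw [← hai]
    _ ≤ ∑ j : Fin (d+1), |V⁻¹ i j * ∑ k : Fin (d + 1), a k * (x j) ^ (k : ℕ)| :=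
        Finset.abs_sum_le_sum_abs _ _
    _ ≤ ∑ _j : Fin (d+1), D⁻¹ * (Nat.factorial (d+1) : ℝ) * M := by
        refine Finset.sum_le_sum fun j _ => ?_
        rw [abs_mul]
        exact mul_le_mul (hinv i j) (hMle j) (abs_nonneg _) (by positivity)
    _ = (d+1) * (Nat.factorial (d+1) : ℝ) * D⁻¹ * M := by
        rw [Finset.sum_const, Finset.card_univ]
        simp
        ring
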